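/- Let Φ : ℝⁿ → {0,1} be a measurable test, let B ⊆ ℝᵖ and P ⊆ ℝᵖ be measurable sets, Π a probability measure on ℝᵖ, and suppose: (i) E_{β⁰}Φ ≤ η₁; (ii) sup_{β ∈ B ∩ P} E_β(1-Φ) ≤ η₁; (iii) for all y in a measurable set A, ∫ f(y|β)/f(y|β⁰) dΠ(β) ≥ c > 0, where f(y|β) is the Gaussian likelihood. Then E_{β⁰}[Π(B | y)] ≤ η₁ + (1/c)·(Π(B ∖ P) + η₁) + Pr_{β⁰}(Aᶜ), where Π(B|y) = ∫_B f(y|β)dΠ(β) / ∫ f(y|β)dΠ(β). -/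

import Mathlib

open MeasureTheory Matrix

lemma const_aux (n : ℕ) (a : ℝ) (ha : 0 < a) :
    a ^ (-(n : ℝ) / 2) = ((Real.sqrt a)⁻¹) ^ n := by
  rw [Real.sqrt_eq_rpow, ← Real.rpow_neg ha.le, ← Real.rpow_natCast (a ^ (-(1/2:ℝ))) n,
    ← Real.rpow_mul ha.le]
  rw [show (-(1/2:ℝ)) * (n:ℝ) = -(n:ℝ)/2 by ring]

lemma gauss_prod_aux (n : ℕ) (σ : ℝ) (hσ : 0 < σ) (m : Fin n → ℝ) (y : Fin n → ℝ) :
    (2 * Real.pi * σ ^ 2) ^ (-(n : ℝ) / 2) *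
      Real.exp (-(∑ j, (y j - m j) ^ 2) / (2 * σ ^ 2)) =
    ∏ j, ProbabilityTheory.gaussianPDFReal (m j) ⟨σ^2, sq_nonneg σ⟩ (y j) := by
  simp only [ProbabilityTheory.gaussianPDFReal, NNReal.coe_mk]
  rw [Finset.prod_mul_distrib, Finset.prod_const, Finset.card_univ, Fintype.card_fin,
    ← Real.exp_sum, const_aux n _ (by positivity)]
  congr 1
  rw [neg_div, Finset.sum_div, ← Finset.sum_neg_distrib]
  simp [neg_div]
  rfl

lemma gauss_aux (n : ℕ) (σ : ℝ) (hσ : 0 < σ) (m : Fin n → ℝ) :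
    Integrable (fun y : Fin n → ℝ => (2 * Real.pi * σ ^ 2) ^ (-(n : ℝ) / 2) *
      Real.exp (-(∑ j, (y j - m j) ^ 2) / (2 * σ ^ 2))) volume ∧
    (∫ y : Fin n → ℝ, (2 * Real.pi * σ ^ 2) ^ (-(n : ℝ) / 2) *
      Real.exp (-(∑ j, (y j - m j) ^ 2) / (2 * σ ^ 2))) = 1 := by
  have hv0 : (⟨σ^2, sq_nonneg σ⟩ : NNReal) ≠ 0 := by
    simp [← NNReal.coe_ne_zero, ne_of_gt (by positivity : (0:ℝ) < σ^2)]
  have key : (fun y : Fin n → ℝ => (2 * Real.pi * σ ^ 2) ^ (-(n : ℝ) / 2) *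
      Real.exp (-(∑ j, (y j - m j) ^ 2) / (2 * σ ^ 2))) =
      fun y => ∏ j, ProbabilityTheory.gaussianPDFReal (m j) ⟨σ^2, sq_nonneg σ⟩ (y j) :=
    funext fun y => gauss_prod_aux n σ hσ m y
  constructor
  · rw [key]
    exact Integrable.fintype_prod (fun j => ProbabilityTheory.integrable_gaussianPDFReal _ _)
  · rw [key, integral_fintype_prod_volume_eq_prod]
    simp [ProbabilityTheory.integral_gaussianPDFReal_eq_one _ hv0]

theorem schwartz_divide_and_conquer (n p : ℕ) (σ : ℝ) (hσ : 0 < σ)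
    (X : Matrix (Fin n) (Fin p) ℝ)
    (f : (Fin n → ℝ) → (Fin p → ℝ) → ℝ)
    (hf : ∀ y β, f y β = (2 * Real.pi * σ ^ 2) ^ (-(n : ℝ) / 2) *
      Real.exp (-(∑ j, (y j - X.mulVec β j) ^ 2) / (2 * σ ^ 2)))
    (Pi : Measure (Fin p → ℝ)) [IsProbabilityMeasure Pi]
    (β0 : Fin p → ℝ)
    (Φ : (Fin n → ℝ) → ℝ) (hΦmeas : Measurable Φ)
    (hΦ01 : ∀ y, Φ y = 0 ∨ Φ y = 1)
    (B P : Set (Fin p → ℝ)) (hB : MeasurableSet B) (hP : MeasurableSet P)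
    (A : Set (Fin n → ℝ)) (hA : MeasurableSet A)
    (η₁ c : ℝ) (hη₁ : 0 ≤ η₁) (hc : 0 < c)
    (h1 : ∫ y, Φ y * f y β0 ≤ η₁)
    (h2 : ∀ β ∈ B ∩ P, ∫ y, (1 - Φ y) * f y β ≤ η₁)
    (h3 : ∀ y ∈ A, c ≤ ∫ β, f y β / f y β0 ∂Pi) :
    ∫ y, ((∫ β in B, f y β ∂Pi) / (∫ β, f y β ∂Pi)) * f y β0 ≤
      η₁ + (1 / c) * ((Pi (B \ P)).toReal + η₁) + ∫ y in Aᶜ, f y β0 := by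
  -- basic facts about f
  set C : ℝ := (2 * Real.pi * σ ^ 2) ^ (-(n : ℝ) / 2) with hCdef
  have hCpos : 0 < C := Real.rpow_pos_of_pos (by positivity) _
  have hfpos : ∀ y β, 0 < f y β := by
    intro y β; rw [hf]; positivity
  have hfleC : ∀ y β, f y β ≤ C := by
    intro y β; rw [hf]
    nth_rewrite 2 [show C = C * 1 by ring]
    refine mul_le_mul_of_nonneg_left ?_ hCpos.le
    rw [Real.exp_le_one_iff]
    have : (0:ℝ) ≤ ∑ j, (y j - X.mulVec β j) ^ 2 :=
      Finset.sum_nonneg fun j _ => sq_nonneg _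
    have h2σ : (0:ℝ) < 2 * σ ^ 2 := by positivity
    exact div_nonpos_of_nonpos_of_nonneg (neg_nonpos_of_nonneg this) h2σ.le
  have hint : ∀ β, Integrable (fun y => f y β) volume := by
    intro β
    have := (gauss_aux n σ hσ (X.mulVec β)).1
    convert this using 1
    funext y; exact hf y β
  have hint1 : ∀ β, (∫ y, f y β) = 1 := by
    intro β
    have := (gauss_aux n σ hσ (X.mulVec β)).2
    rw [← this]
    congr 1; funext y; exact hf y β
  -- joint continuity
  have hfcont : Continuous (fun q : (Fin n → ℝ) × (Fin p → ℝ) => f q.1 q.2) := by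
    have : (fun q : (Fin n → ℝ) × (Fin p → ℝ) => f q.1 q.2) =
        fun q => C * Real.exp (-(∑ j, (q.1 j - ∑ k, X j k * q.2 k) ^ 2) / (2 * σ ^ 2)) := by
      funext q; rw [hf]; rfl
    rw [this]
    refine continuous_const.mul (Real.continuous_exp.comp (Continuous.div_const ?_ _))
    refine Continuous.neg (continuous_finset_sum _ fun j _ => Continuous.pow ?_ 2)
    refine ((continuous_apply j).comp continuous_fst).sub ?_
    exact continuous_finset_sum _ fun k _ =>
      continuous_const.mul ((continuous_apply k).comp continuous_snd)
  have hfsm : StronglyMeasurable (fun q : (Fin n → ℝ) × (Fin p → ℝ) => f q.1 q.2) :=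
    hfcont.stronglyMeasurable
  -- integrability over Pi
  have hPiInt : ∀ y, Integrable (fun β => f y β) Pi := by
    intro y
    refine Integrable.mono' (integrable_const C) ?_ ?_
    · exact (hfcont.comp (continuous_const.prodMk continuous_id)).aestronglyMeasurable
    · exact ae_of_all _ fun β => by
        rw [Real.norm_eq_abs, abs_of_pos (hfpos y β)]; exact hfleC y β
  set den : (Fin n → ℝ) → ℝ := fun y => ∫ β, f y β ∂Pi with hden
  set num : (Fin n → ℝ) → ℝ := fun y => ∫ β in B, f y β ∂Pi with hnum
  have hdenpos : ∀ y, 0 < den y := by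
    intro y
    rw [hden]
    rw [integral_pos_iff_support_of_nonneg (fun β => (hfpos y β).le) (hPiInt y)]
    have : Function.support (fun β => f y β) = Set.univ :=
      Set.eq_univ_of_forall fun β => (hfpos y β).ne'
    rw [this]
    simp
  have hnum_nonneg : ∀ y, 0 ≤ num y := fun y =>
    integral_nonneg fun β => (hfpos y β).le
  have hnumle : ∀ y, num y ≤ den y := fun y =>
    setIntegral_le_integral (hPiInt y) (ae_of_all _ fun β => (hfpos y β).le)
  -- measurability of num, den
  have hden_sm : StronglyMeasurable den := hfsm.integral_prod_right'
  have hnum_sm : StronglyMeasurable num := hfsm.integral_prod_right'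
  -- lower bound for den on A
  have hdenA : ∀ y ∈ A, c * f y β0 ≤ den y := by
    intro y hy
    have hr : den y = f y β0 * ∫ β, f y β / f y β0 ∂Pi := by
      simp only [hden]
      rw [← integral_const_mul]
      congr 1; funext β
      rw [mul_comm, div_mul_cancel₀ _ (hfpos y β0).ne']
    rw [hr, mul_comm c (f y β0)]
    exact mul_le_mul_of_nonneg_left (h3 y hy) (hfpos y β0).le
  -- Φ facts
  have hΦ0 : ∀ y, 0 ≤ Φ y := fun y => by rcases hΦ01 y with h | h <;> rw [h] <;> norm_num
  have hΦ1 : ∀ y, Φ y ≤ 1 := fun y => by rcases hΦ01 y with h | h <;> rw [h] <;> norm_num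
  have h1Φ0 : ∀ y, 0 ≤ 1 - Φ y := fun y => by linarith [hΦ1 y]
  have h1Φ1 : ∀ y, 1 - Φ y ≤ 1 := fun y => by linarith [hΦ0 y]
  -- product integrability
  have humeas : Measurable (fun q : (Fin n → ℝ) × (Fin p → ℝ) => (1 - Φ q.1) * f q.1 q.2) :=
    (measurable_const.sub (hΦmeas.comp measurable_fst)).mul hfcont.measurable
  have hu_nonneg : ∀ q : (Fin n → ℝ) × (Fin p → ℝ), 0 ≤ (1 - Φ q.1) * f q.1 q.2 :=
    fun q => mul_nonneg (h1Φ0 q.1) (hfpos q.1 q.2).le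
  have hu_le : ∀ (y) (β : Fin p → ℝ), (1 - Φ y) * f y β ≤ f y β := by
    intro y β
    nth_rewrite 2 [show f y β = 1 * f y β by ring]
    exact mul_le_mul_of_nonneg_right (h1Φ1 y) (hfpos y β).le
  have hinner : ∀ β, (∫⁻ y, ENNReal.ofReal ((1 - Φ y) * f y β)) ≤ 1 := by
    intro β
    calc ∫⁻ y, ENNReal.ofReal ((1 - Φ y) * f y β)
        ≤ ∫⁻ y, ENNReal.ofReal (f y β) :=
          lintegral_mono fun y => ENNReal.ofReal_le_ofReal (hu_le y β)
      _ = ENNReal.ofReal (∫ y, f y β) :=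
          (ofReal_integral_eq_lintegral_ofReal (hint β)
            (ae_of_all _ fun y => (hfpos y β).le)).symm
      _ = 1 := by rw [hint1 β, ENNReal.ofReal_one]
  have hu_int : Integrable (fun q : (Fin n → ℝ) × (Fin p → ℝ) => (1 - Φ q.1) * f q.1 q.2)
      (volume.prod (Pi.restrict B)) := by
    constructor
    · exact humeas.aestronglyMeasurable
    · rw [hasFiniteIntegral_iff_norm]
      have hnrm : ∀ q : (Fin n → ℝ) × (Fin p → ℝ),
          ENNReal.ofReal ‖(1 - Φ q.1) * f q.1 q.2‖ =
          ENNReal.ofReal ((1 - Φ q.1) * f q.1 q.2) := by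
        intro q; rw [Real.norm_eq_abs, abs_of_nonneg (hu_nonneg q)]
      simp_rw [hnrm]
      rw [lintegral_prod_symm' _ humeas.ennreal_ofReal]
      calc ∫⁻ β, ∫⁻ y, ENNReal.ofReal ((1 - Φ y) * f y β) ∂volume ∂(Pi.restrict B)
          ≤ ∫⁻ _, 1 ∂(Pi.restrict B) := lintegral_mono fun β => hinner β
        _ = Pi.restrict B Set.univ := by simp
        _ ≤ 1 := by rw [Measure.restrict_apply_univ]; exact prob_le_one
        _ < ⊤ := ENNReal.one_lt_top
  have hintg : Integrable (fun y => (1 - Φ y) * num y) volume := by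
    have h := hu_int.integral_prod_left
    refine h.congr (ae_of_all _ fun y => ?_)
    show (∫ β in B, (1 - Φ y) * f y β ∂Pi) = (1 - Φ y) * num y
    rw [integral_const_mul]
  have hswap : ∫ y, (1 - Φ y) * num y =
      ∫ β, (∫ y, (1 - Φ y) * f y β) ∂(Pi.restrict B) := by
    have h := integral_integral_swap (f := fun y β => (1 - Φ y) * f y β) hu_int
    have h2' : (∫ y, ∫ β, (1 - Φ y) * f y β ∂(Pi.restrict B)) =
        ∫ y, (1 - Φ y) * num y := by
      congr 1; funext y; rw [integral_const_mul]
    rw [← h2', h]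
  have hg_int : Integrable (fun β => ∫ y, (1 - Φ y) * f y β) (Pi.restrict B) :=
    hu_int.integral_prod_right
  have hub_int : ∀ β : Fin p → ℝ, Integrable (fun y => (1 - Φ y) * f y β) volume := by
    intro β
    refine Integrable.mono' (hint β) ?_ (ae_of_all _ fun y => ?_)
    · exact ((measurable_const.sub hΦmeas).mul
        (hfcont.comp (continuous_id.prodMk continuous_const)).measurable).aestronglyMeasurable
    · rw [Real.norm_eq_abs, abs_of_nonneg (mul_nonneg (h1Φ0 y) (hfpos y β).le)]
      exact hu_le y β
  have hg_le1 : ∀ β : Fin p → ℝ, (∫ y, (1 - Φ y) * f y β) ≤ 1 := by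
    intro β
    calc ∫ y, (1 - Φ y) * f y β ≤ ∫ y, f y β :=
          integral_mono (hub_int β) (hint β) fun y => hu_le y β
      _ = 1 := hint1 β
  have hmain2 : ∫ β, (∫ y, (1 - Φ y) * f y β) ∂(Pi.restrict B) ≤
      (Pi (B \ P)).toReal + η₁ := by
    have hbd_int : Integrable
        (fun β => (B \ P).indicator (fun _ => (1:ℝ)) β + η₁) (Pi.restrict B) :=
      ((integrable_const (1:ℝ)).indicator (hB.diff hP)).add (integrable_const η₁)
    have hmono : ∀ᵐ β ∂(Pi.restrict B), (∫ y, (1 - Φ y) * f y β) ≤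
        (B \ P).indicator (fun _ => (1:ℝ)) β + η₁ := by
      filter_upwards [ae_restrict_mem hB] with β hβ
      by_cases hβP : β ∈ P
      · have hh := h2 β ⟨hβ, hβP⟩
        have hind : (0:ℝ) ≤ (B \ P).indicator (fun _ => (1:ℝ)) β :=
          Set.indicator_nonneg (fun _ _ => zero_le_one) β
        linarith
      · have hone : (B \ P).indicator (fun _ => (1:ℝ)) β = 1 :=
          Set.indicator_of_mem ((Set.mem_diff β).mpr ⟨hβ, hβP⟩) _
        rw [hone]; linarith [hg_le1 β]
    calc ∫ β, (∫ y, (1 - Φ y) * f y β) ∂(Pi.restrict B)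
        ≤ ∫ β, ((B \ P).indicator (fun _ => (1:ℝ)) β + η₁) ∂(Pi.restrict B) :=
          integral_mono_ae hg_int hbd_int hmono
      _ = (Pi.restrict B (B \ P)).toReal + η₁ * (Pi.restrict B Set.univ).toReal := by
          rw [integral_add ((integrable_const (1:ℝ)).indicator (hB.diff hP))
            (integrable_const η₁), integral_indicator_const _ (hB.diff hP), integral_const]
          simp [smul_eq_mul, mul_comm]
          rfl
      _ ≤ (Pi (B \ P)).toReal + η₁ := by
          rw [Measure.restrict_apply (hB.diff hP),
            Set.inter_eq_self_of_subset_left Set.diff_subset, Measure.restrict_apply_univ]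
          have h1' : ((Pi B).toReal) ≤ 1 := by
            have := prob_le_one (μ := Pi) (s := B)
            simpa using ENNReal.toReal_mono (by norm_num) this
          nlinarith [hη₁]
  have hT2chain : ∫ y, (1 - Φ y) * num y ≤ (Pi (B \ P)).toReal + η₁ := by
    rw [hswap]; exact hmain2
  set T1 : (Fin n → ℝ) → ℝ := fun y => Φ y * f y β0 with hT1
  set T2 : (Fin n → ℝ) → ℝ := A.indicator (fun y => (1 - Φ y) * (num y / c)) with hT2
  set T3 : (Fin n → ℝ) → ℝ := Aᶜ.indicator (fun y => f y β0) with hT3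
  have hfβ0meas : Measurable (fun y => f y β0) :=
    (hfcont.comp (continuous_id.prodMk continuous_const)).measurable
  have hT1int : Integrable T1 volume := by
    refine Integrable.mono' (hint β0) ?_ (ae_of_all _ fun y => ?_)
    · exact (hΦmeas.mul hfβ0meas).aestronglyMeasurable
    · rw [Real.norm_eq_abs]
      show |Φ y * f y β0| ≤ f y β0
      rw [abs_of_nonneg (mul_nonneg (hΦ0 y) (hfpos y β0).le)]
      nth_rewrite 2 [show f y β0 = 1 * f y β0 by ring]
      exact mul_le_mul_of_nonneg_right (hΦ1 y) (hfpos y β0).le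
  have hT2full_int : Integrable (fun y => (1 - Φ y) * (num y / c)) volume := by
    refine (hintg.div_const c).congr (ae_of_all _ fun y => ?_)
    ring
  have hT2int : Integrable T2 volume := hT2full_int.indicator hA
  have hT3int : Integrable T3 volume := (hint β0).indicator hA.compl
  have hT2nn : ∀ y, 0 ≤ T2 y := fun y => by
    rw [hT2]
    exact Set.indicator_nonneg
      (fun x _ => mul_nonneg (h1Φ0 x) (div_nonneg (hnum_nonneg x) hc.le)) y
  have hpt : ∀ y, num y / den y * f y β0 ≤ T1 y + T2 y + T3 y := by
    intro y
    have hrle1 : num y / den y ≤ 1 := (div_le_one (hdenpos y)).mpr (hnumle y)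
    have hrnn : 0 ≤ num y / den y := div_nonneg (hnum_nonneg y) (hdenpos y).le
    have hbase : num y / den y * f y β0 ≤ f y β0 := by
      nth_rewrite 2 [show f y β0 = 1 * f y β0 by ring]
      exact mul_le_mul_of_nonneg_right hrle1 (hfpos y β0).le
    rcases hΦ01 y with h0 | h0
    · by_cases hyA : y ∈ A
      · have hT1y : T1 y = 0 := by rw [hT1]; simp [h0]
        have hT2y : T2 y = (1 - Φ y) * (num y / c) := by
          rw [hT2]; exact Set.indicator_of_mem hyA _
        have hT3y : T3 y = 0 := by
          rw [hT3]; exact Set.indicator_of_notMem (by simpa using hyA) _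
        have hd := hdenA y hyA
        have hfrac : f y β0 / den y ≤ 1 / c := by
          rw [div_le_div_iff₀ (hdenpos y) hc]; nlinarith
        have : num y / den y * f y β0 ≤ num y / c := by
          calc num y / den y * f y β0 = num y * (f y β0 / den y) := by ring
            _ ≤ num y * (1 / c) := mul_le_mul_of_nonneg_left hfrac (hnum_nonneg y)
            _ = num y / c := by ring
        rw [hT1y, hT2y, hT3y, h0]
        simpa using this
      · have hT3y : T3 y = f y β0 := by
          rw [hT3]; exact Set.indicator_of_mem (by simpa using hyA) _
        have hT1y : 0 ≤ T1 y := mul_nonneg (hΦ0 y) (hfpos y β0).le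
        rw [hT3y]
        linarith [hT2nn y]
    · have hT1y : T1 y = f y β0 := by rw [hT1]; simp [h0]
      have hT3y : 0 ≤ T3 y := by
        rw [hT3]; exact Set.indicator_nonneg (fun x _ => (hfpos x β0).le) y
      rw [hT1y]
      linarith [hT2nn y]
  have hLHSint : Integrable (fun y => num y / den y * f y β0) volume := by
    refine Integrable.mono' (hint β0) ?_ (ae_of_all _ fun y => ?_)
    · exact ((hnum_sm.measurable.div hden_sm.measurable).mul hfβ0meas).aestronglyMeasurable
    · rw [Real.norm_eq_abs]
      show |num y / den y * f y β0| ≤ f y β0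
      rw [abs_of_nonneg (mul_nonneg (div_nonneg (hnum_nonneg y) (hdenpos y).le)
        (hfpos y β0).le)]
      nth_rewrite 2 [show f y β0 = 1 * f y β0 by ring]
      exact mul_le_mul_of_nonneg_right ((div_le_one (hdenpos y)).mpr (hnumle y))
        (hfpos y β0).le
  have hT1bound : ∫ y, T1 y ≤ η₁ := h1
  have hT2bound : ∫ y, T2 y ≤ (1 / c) * ((Pi (B \ P)).toReal + η₁) := by
    have step1 : ∫ y, T2 y ≤ ∫ y, (1 - Φ y) * (num y / c) := by
      refine integral_mono hT2int hT2full_int fun y => ?_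
      rw [hT2]
      exact Set.indicator_le_self'
        (fun x _ => mul_nonneg (h1Φ0 x) (div_nonneg (hnum_nonneg x) hc.le)) y
    have step2 : (∫ y, (1 - Φ y) * (num y / c)) = (1 / c) * ∫ y, (1 - Φ y) * num y := by
      rw [← integral_const_mul]
      congr 1; funext y; ring
    have step3 : (1 / c) * (∫ y, (1 - Φ y) * num y) ≤
        (1 / c) * ((Pi (B \ P)).toReal + η₁) :=
      mul_le_mul_of_nonneg_left hT2chain (by positivity)
    linarith
  have hT3eq : ∫ y, T3 y = ∫ y in Aᶜ, f y β0 := by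
    rw [hT3, integral_indicator hA.compl]
  calc ∫ y, ((∫ β in B, f y β ∂Pi) / (∫ β, f y β ∂Pi)) * f y β0
      = ∫ y, num y / den y * f y β0 := rfl
    _ ≤ ∫ y, (T1 y + T2 y + T3 y) :=
        integral_mono hLHSint ((hT1int.add hT2int).add hT3int) hpt
    _ = (∫ y, T1 y + T2 y) + ∫ y, T3 y := integral_add (hT1int.add hT2int) hT3int
    _ = (∫ y, T1 y) + (∫ y, T2 y) + (∫ y, T3 y) := by rw [integral_add hT1int hT2int]
    _ ≤ η₁ + (1 / c) * ((Pi (B \ P)).toReal + η₁) + ∫ y in Aᶜ, f y β0 := by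
        rw [hT3eq]
        exact add_le_add (add_le_add hT1bound hT2bound) le_rfl
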